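/- Let l, k > 0. For v ∈ (0, k), set a(v)² = 2l²(k−v)v / (k² + l² − √((k²+l²)² − 16l²(k−v)v)) and b(v)² = 2l²(k−v)v / (k² + l² + √((k²+l²)² − 16l²(k−v)v)), and define the arc length L(v) = 2·∫₀^{π/2} √(a(v)² + b(v)² − (a(v)² − b(v)²)·cos(2t)) dt. Then L attains a strict global maximum on (0, k) at v = k/2; that is, for every v ∈ (0, k) with v ≠ k/2, L(v) < L(k/2). (This says the midpoint ellipse is the unique ellipse of maximal arc length inscribed in the rectangle [0,l] × [0,k].) -/

import Mathlib

open intervalIntegral Real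

/-- Pointwise comparison: `√(A-Dc)+√(A+Dc)` is antitone in `D` for `|c| ≤ 1`, `0 ≤ D < A`. -/
lemma key_le (A D D' c : ℝ) (hD' : 0 ≤ D') (hDD : D' ≤ D) (hDA : D < A) (hc : |c| ≤ 1) :
    Real.sqrt (A - D * c) + Real.sqrt (A + D * c) ≤
      Real.sqrt (A - D' * c) + Real.sqrt (A + D' * c) := by
  obtain ⟨hc1, hc2⟩ := abs_le.mp hc
  have hD : 0 ≤ D := hD'.trans hDD
  have h1 : 0 ≤ A - D * c := by nlinarith
  have h2 : 0 ≤ A + D * c := by nlinarith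
  have h1' : 0 ≤ A - D' * c := by nlinarith
  have h2' : 0 ≤ A + D' * c := by nlinarith
  have e1 : (Real.sqrt (A - D * c) + Real.sqrt (A + D * c)) ^ 2
      = 2 * A + 2 * Real.sqrt (A ^ 2 - D ^ 2 * c ^ 2) := by
    rw [add_sq, Real.sq_sqrt h1, Real.sq_sqrt h2, mul_assoc, ← Real.sqrt_mul h1,
      show (A - D * c) * (A + D * c) = A ^ 2 - D ^ 2 * c ^ 2 by ring]
    ring
  have e2 : (Real.sqrt (A - D' * c) + Real.sqrt (A + D' * c)) ^ 2
      = 2 * A + 2 * Real.sqrt (A ^ 2 - D' ^ 2 * c ^ 2) := by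
    rw [add_sq, Real.sq_sqrt h1', Real.sq_sqrt h2', mul_assoc, ← Real.sqrt_mul h1',
      show (A - D' * c) * (A + D' * c) = A ^ 2 - D' ^ 2 * c ^ 2 by ring]
    ring
  have hsq : (Real.sqrt (A - D * c) + Real.sqrt (A + D * c)) ^ 2
      ≤ (Real.sqrt (A - D' * c) + Real.sqrt (A + D' * c)) ^ 2 := by
    rw [e1, e2]
    have : A ^ 2 - D ^ 2 * c ^ 2 ≤ A ^ 2 - D' ^ 2 * c ^ 2 := by
      nlinarith [mul_le_mul_of_nonneg_right (mul_self_le_mul_self hD' hDD) (sq_nonneg c)]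
    nlinarith [Real.sqrt_le_sqrt this]
  calc Real.sqrt (A - D * c) + Real.sqrt (A + D * c)
      = Real.sqrt ((Real.sqrt (A - D * c) + Real.sqrt (A + D * c)) ^ 2) := by
        rw [Real.sqrt_sq (by positivity)]
    _ ≤ Real.sqrt ((Real.sqrt (A - D' * c) + Real.sqrt (A + D' * c)) ^ 2) :=
        Real.sqrt_le_sqrt hsq
    _ = _ := Real.sqrt_sq (by positivity)

lemma key_lt (A D D' c : ℝ) (hD' : 0 ≤ D') (hDD : D' < D) (hDA : D < A) (hc : |c| ≤ 1)
    (hc0 : c ≠ 0) :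
    Real.sqrt (A - D * c) + Real.sqrt (A + D * c) <
      Real.sqrt (A - D' * c) + Real.sqrt (A + D' * c) := by
  obtain ⟨hc1, hc2⟩ := abs_le.mp hc
  have hD : 0 ≤ D := hD'.trans hDD.le
  have h1 : 0 ≤ A - D * c := by nlinarith
  have h2 : 0 ≤ A + D * c := by nlinarith
  have h1' : 0 ≤ A - D' * c := by nlinarith
  have h2' : 0 ≤ A + D' * c := by nlinarith
  have e1 : (Real.sqrt (A - D * c) + Real.sqrt (A + D * c)) ^ 2
      = 2 * A + 2 * Real.sqrt (A ^ 2 - D ^ 2 * c ^ 2) := by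
    rw [add_sq, Real.sq_sqrt h1, Real.sq_sqrt h2, mul_assoc, ← Real.sqrt_mul h1,
      show (A - D * c) * (A + D * c) = A ^ 2 - D ^ 2 * c ^ 2 by ring]
    ring
  have e2 : (Real.sqrt (A - D' * c) + Real.sqrt (A + D' * c)) ^ 2
      = 2 * A + 2 * Real.sqrt (A ^ 2 - D' ^ 2 * c ^ 2) := by
    rw [add_sq, Real.sq_sqrt h1', Real.sq_sqrt h2', mul_assoc, ← Real.sqrt_mul h1',
      show (A - D' * c) * (A + D' * c) = A ^ 2 - D' ^ 2 * c ^ 2 by ring]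
    ring
  have hc2pos : 0 < c ^ 2 := by positivity
  have hsq : (Real.sqrt (A - D * c) + Real.sqrt (A + D * c)) ^ 2
      < (Real.sqrt (A - D' * c) + Real.sqrt (A + D' * c)) ^ 2 := by
    rw [e1, e2]
    have hlt : A ^ 2 - D ^ 2 * c ^ 2 < A ^ 2 - D' ^ 2 * c ^ 2 := by
      nlinarith [mul_lt_mul_of_pos_right (mul_self_lt_mul_self hD' hDD) hc2pos]
    have hnn : 0 ≤ A ^ 2 - D ^ 2 * c ^ 2 := by nlinarith
    nlinarith [Real.sqrt_lt_sqrt hnn hlt]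
  exact lt_of_pow_lt_pow_left₀ 2 (by positivity) hsq

theorem stmt_14 (l k : ℝ) (hl : 0 < l) (hk : 0 < k)
    (a2 b2 L : ℝ → ℝ)
    (ha2 : ∀ v, a2 v = 2 * l ^ 2 * (k - v) * v /
      (k ^ 2 + l ^ 2 - Real.sqrt ((k ^ 2 + l ^ 2) ^ 2 - 16 * l ^ 2 * (k - v) * v)))
    (hb2 : ∀ v, b2 v = 2 * l ^ 2 * (k - v) * v /
      (k ^ 2 + l ^ 2 + Real.sqrt ((k ^ 2 + l ^ 2) ^ 2 - 16 * l ^ 2 * (k - v) * v)))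
    (hL : ∀ v, L v = 2 * ∫ t in (0 : ℝ)..(Real.pi / 2),
      Real.sqrt (a2 v + b2 v - (a2 v - b2 v) * Real.cos (2 * t))) :
    ∀ v ∈ Set.Ioo (0 : ℝ) k, v ≠ k / 2 → L v < L (k / 2) := by
  intro v hv hne
  obtain ⟨hv0, hvk⟩ := hv
  set A : ℝ := k ^ 2 + l ^ 2 with hA
  have hApos : 0 < A := by positivity
  set D : ℝ → ℝ := fun w => Real.sqrt (A ^ 2 - 16 * l ^ 2 * (k - w) * w) with hD
  -- basic facts about D for w ∈ (0,k)
  have hDfacts : ∀ w, 0 < w → w < k → 0 ≤ D w ∧ D w < A ∧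
      (D w) ^ 2 = A ^ 2 - 16 * l ^ 2 * (k - w) * w := by
    intro w hw0 hwk
    have hs : 0 < (k - w) * w := by nlinarith
    have hsk : (k - w) * w ≤ k ^ 2 / 4 := by nlinarith [sq_nonneg (w - k/2)]
    have hnn : 0 ≤ A ^ 2 - 16 * l ^ 2 * (k - w) * w := by
      have : 4 * l ^ 2 * k ^ 2 ≤ A ^ 2 := by nlinarith [sq_nonneg (k^2 - l^2)]
      nlinarith
    have hsq : (D w) ^ 2 = A ^ 2 - 16 * l ^ 2 * (k - w) * w := Real.sq_sqrt hnn
    refine ⟨Real.sqrt_nonneg _, ?_, hsq⟩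
    have hlt : A ^ 2 - 16 * l ^ 2 * (k - w) * w < A ^ 2 := by
      nlinarith [mul_pos (show (0:ℝ) < 16 * l ^ 2 by positivity) hs]
    calc D w < Real.sqrt (A ^ 2) := Real.sqrt_lt_sqrt hnn hlt
      _ = A := Real.sqrt_sq hApos.le
  -- sum and difference formulas
  have hsumdiff : ∀ w, 0 < w → w < k →
      a2 w + b2 w = A / 4 ∧ a2 w - b2 w = D w / 4 := by
    intro w hw0 hwk
    obtain ⟨hD0, hDA, hDsq⟩ := hDfacts w hw0 hwk
    have hs : 0 < (k - w) * w := by nlinarith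
    have hsub : 0 < A - D w := by linarith
    have hadd : 0 < A + D w := by linarith
    rw [ha2, hb2]
    constructor
    · rw [div_add_div _ _ (ne_of_gt hsub) (ne_of_gt hadd), div_eq_div_iff (by positivity) (by norm_num)]
      nlinarith [hDsq]
    · rw [div_sub_div _ _ (ne_of_gt hsub) (ne_of_gt hadd), div_eq_div_iff (by positivity) (by norm_num)]
      nlinarith [hDsq]
  -- L rewritten
  have hπ : 0 < Real.pi := Real.pi_pos
  have hcont : ∀ d : ℝ, Continuous fun t : ℝ => Real.sqrt (A - d * Real.cos (2 * t)) := by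
    intro d
    exact (continuous_const.sub (continuous_const.mul
      (Real.continuous_cos.comp (continuous_const.mul continuous_id)))).sqrt
  have hcont' : ∀ d : ℝ, Continuous fun t : ℝ => Real.sqrt (A + d * Real.cos (2 * t)) := by
    intro d
    exact (continuous_const.add (continuous_const.mul
      (Real.continuous_cos.comp (continuous_const.mul continuous_id)))).sqrt
  have hLrw : ∀ w, 0 < w → w < k → 2 * L w =
      ∫ t in (0:ℝ)..(Real.pi / 2),
        (Real.sqrt (A - D w * Real.cos (2 * t)) + Real.sqrt (A + D w * Real.cos (2 * t))) := by
    intro w hw0 hwk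
    obtain ⟨hD0, hDA, hDsq⟩ := hDfacts w hw0 hwk
    obtain ⟨hsum, hdiff⟩ := hsumdiff w hw0 hwk
    have hint1 : L w = ∫ t in (0:ℝ)..(Real.pi / 2), Real.sqrt (A - D w * Real.cos (2 * t)) := by
      rw [hL, hsum, hdiff]
      have : ∀ t : ℝ, Real.sqrt (A / 4 - D w / 4 * Real.cos (2 * t))
          = Real.sqrt (A - D w * Real.cos (2 * t)) * (1 / 2) := by
        intro t
        have hcc : |Real.cos (2 * t)| ≤ 1 := Real.abs_cos_le_one _
        obtain ⟨hc1, hc2⟩ := abs_le.mp hcc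
        have hnn : 0 ≤ A - D w * Real.cos (2 * t) := by nlinarith
        rw [show A / 4 - D w / 4 * Real.cos (2 * t)
            = (A - D w * Real.cos (2 * t)) * (1 / 2) ^ 2 by ring,
          Real.sqrt_mul hnn, Real.sqrt_sq (by norm_num)]
      simp_rw [this]
      rw [intervalIntegral.integral_mul_const]
      ring
    have hint2 : (∫ t in (0:ℝ)..(Real.pi / 2), Real.sqrt (A - D w * Real.cos (2 * t)))
        = ∫ t in (0:ℝ)..(Real.pi / 2), Real.sqrt (A + D w * Real.cos (2 * t)) := by
      have := intervalIntegral.integral_comp_sub_left (a := (0:ℝ)) (b := Real.pi / 2)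
        (fun t => Real.sqrt (A - D w * Real.cos (2 * t))) (Real.pi / 2)
      simp only [sub_zero, sub_self] at this
      rw [← this]
      congr 1
      ext t
      rw [show 2 * (Real.pi / 2 - t) = Real.pi - 2 * t by ring, Real.cos_pi_sub]
      ring_nf
    rw [hint1, intervalIntegral.integral_add
      ((hcont (D w)).intervalIntegrable _ _) ((hcont' (D w)).intervalIntegrable _ _)]
    rw [← hint2]
    ring
  -- compare D values
  have hk2 : 0 < k / 2 := by linarith
  have hk2' : k / 2 < k := by linarith
  obtain ⟨hDv0, hDvA, hDvsq⟩ := hDfacts v hv0 hvk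
  obtain ⟨hDm0, hDmA, hDmsq⟩ := hDfacts (k/2) hk2 hk2'
  have hDlt : D (k/2) < D v := by
    have hsq : (D (k/2)) ^ 2 < (D v) ^ 2 := by
      rw [hDvsq, hDmsq]
      nlinarith [sq_pos_of_ne_zero (sub_ne_zero.mpr hne), sq_nonneg l, mul_pos (mul_pos hl hl) (sq_pos_of_ne_zero (sub_ne_zero.mpr hne))]
    exact lt_of_pow_lt_pow_left₀ 2 hDv0 hsq
  -- final comparison
  have hmain : 2 * L v < 2 * L (k/2) := by
    rw [hLrw v hv0 hvk, hLrw (k/2) hk2 hk2']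
    apply intervalIntegral.integral_lt_integral_of_continuousOn_of_le_of_exists_lt
      (by positivity)
      (((hcont (D v)).add (hcont' (D v))).continuousOn)
      (((hcont (D (k/2))).add (hcont' (D (k/2)))).continuousOn)
    · intro t ht
      exact key_le A (D v) (D (k/2)) (Real.cos (2 * t)) hDm0 hDlt.le hDvA
        (Real.abs_cos_le_one _)
    · refine ⟨0, Set.left_mem_Icc.mpr (by positivity), ?_⟩
      have : Real.cos (2 * 0) = 1 := by norm_num
      simp only [Pi.add_apply]
      rw [this]
      exact key_lt A (D v) (D (k/2)) 1 hDm0 hDlt hDvA (by norm_num) one_ne_zero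
  linarith
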